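/- Degree of Sylvester sums as polynomials: for a suitable pair (A,B) of k-tuples, S_m(A,B), viewed as a polynomial in the variables a_1,...,a_k,b_1,...,b_k (given by the Bernoulli-number summation formula), has total degree (m+1)(k+1); in particular every monomial M appearing satisfies km' ≤ deg(M) ≤ (k+1)m' for m'=m+1, and the top-degree coefficient is positive. -/

import Mathlib

open Finset MvPolynomial

def sylvE (k m : ℕ) (p : (Fin (k+1) → Fin (m+1)) × (Fin k → Fin (m+1))) (i : Fin k) : ℕ :=
  (∑ l ∈ Finset.univ.filter (fun l : Fin (k + 1) => (l : ℕ) ≤ (i : ℕ)), (p.1 l : ℕ)) +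
    ∑ l ∈ Finset.univ.filter (fun l : Fin k => (l : ℕ) ≤ (i : ℕ)), (p.2 l : ℕ)

def sylvF (k m : ℕ) (p : (Fin (k+1) → Fin (m+1)) × (Fin k → Fin (m+1))) (i : Fin k) : ℕ :=
  (∑ l ∈ Finset.univ.filter (fun l : Fin (k + 1) => (i : ℕ) < (l : ℕ)), (p.1 l : ℕ)) +
    ∑ l ∈ Finset.univ.filter (fun l : Fin k => (i : ℕ) ≤ (l : ℕ)), (p.2 l : ℕ)

noncomputable def sylvD (k m : ℕ) (p : (Fin (k+1) → Fin (m+1)) × (Fin k → Fin (m+1))) :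
    (Fin k ⊕ Fin k) →₀ ℕ :=
  ∑ i : Fin k, (Finsupp.single (Sum.inl i) (sylvE k m p i)
    + Finsupp.single (Sum.inr i) (sylvF k m p i))

noncomputable def sylvC (k m : ℕ) (p : (Fin (k+1) → Fin (m+1)) × (Fin k → Fin (m+1))) : ℚ :=
  (∏ i : Fin (k + 1), bernoulli (p.1 i : ℕ) / ((p.1 i : ℕ).factorial : ℚ)) /
    (∏ j : Fin k, (((p.2 j : ℕ) + 1).factorial : ℚ))

lemma sylv_prod_X_pow {k : ℕ} (e f : Fin k → ℕ) (s : Finset (Fin k)) :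
    (∏ i ∈ s, (X (Sum.inl i) : MvPolynomial (Fin k ⊕ Fin k) ℚ) ^ e i * X (Sum.inr i) ^ f i)
      = monomial (∑ i ∈ s, (Finsupp.single (Sum.inl i) (e i)
          + Finsupp.single (Sum.inr i) (f i))) 1 := by
  classical
  induction s using Finset.induction_on with
  | empty => simp [monomial_zero']
  | @insert _ _ h ih =>
      rw [Finset.prod_insert h, Finset.sum_insert h, ih, X_pow_eq_monomial, X_pow_eq_monomial,
        monomial_mul, monomial_mul]
      simp [add_assoc]

lemma sylv_W_sum {σ : Type*} {ι : Type*} (s : Finset ι) (g : ι → (σ →₀ ℕ)) :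
    (∑ i ∈ s, g i).sum (fun _ e => e) = ∑ i ∈ s, (g i).sum (fun _ e => e) := by
  classical
  induction s using Finset.induction_on with
  | empty => simp
  | @insert _ _ h ih =>
      rw [Finset.sum_insert h, Finsupp.sum_add_index' (fun _ => rfl) (fun _ _ _ => rfl),
        Finset.sum_insert h, ih]

lemma sylv_W_single {σ : Type*} (a : σ) (n : ℕ) :
    (Finsupp.single a n).sum (fun _ e => e) = n := by
  simp [Finsupp.sum_single_index]

lemma sylv_split1 {k : ℕ} (x : Fin (k+1) → ℕ) (i : Fin k) :
    (∑ l ∈ Finset.univ.filter (fun l : Fin (k+1) => (l : ℕ) ≤ (i : ℕ)), x l) +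
      (∑ l ∈ Finset.univ.filter (fun l : Fin (k+1) => (i : ℕ) < (l : ℕ)), x l)
      = ∑ l, x l := by
  rw [← Finset.sum_filter_add_sum_filter_not Finset.univ (fun l : Fin (k+1) => (l : ℕ) ≤ (i : ℕ)) x]
  congr 1
  apply Finset.sum_congr _ (fun _ _ => rfl)
  apply Finset.filter_congr
  intro l _
  simp [not_le]

lemma sylv_split2 {k : ℕ} (y : Fin k → ℕ) (i : Fin k) :
    (∑ l ∈ Finset.univ.filter (fun l : Fin k => (l : ℕ) ≤ (i : ℕ)), y l) +
      (∑ l ∈ Finset.univ.filter (fun l : Fin k => (i : ℕ) ≤ (l : ℕ)), y l)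
      = (∑ l, y l) + y i := by
  have h1 : Finset.univ.filter (fun l : Fin k => (i : ℕ) ≤ (l : ℕ))
      = insert i (Finset.univ.filter (fun l : Fin k => (i : ℕ) < (l : ℕ))) := by
    ext l
    simp [Fin.ext_iff]
    omega
  have h2 : i ∉ Finset.univ.filter (fun l : Fin k => (i : ℕ) < (l : ℕ)) := by simp
  rw [h1, Finset.sum_insert h2]
  have h3 : (∑ l ∈ Finset.univ.filter (fun l : Fin k => (l : ℕ) ≤ (i : ℕ)), y l) +
      (∑ l ∈ Finset.univ.filter (fun l : Fin k => (i : ℕ) < (l : ℕ)), y l) = ∑ l, y l := by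
    rw [← Finset.sum_filter_add_sum_filter_not Finset.univ (fun l : Fin k => (l : ℕ) ≤ (i : ℕ)) y]
    congr 1
    apply Finset.sum_congr _ (fun _ _ => rfl)
    apply Finset.filter_congr
    intro l _
    simp [not_le]
  omega

lemma sylvD_sum (k m : ℕ) (p : (Fin (k+1) → Fin (m+1)) × (Fin k → Fin (m+1))) :
    (sylvD k m p).sum (fun _ e => e)
      = k * ((∑ i : Fin (k+1), (p.1 i : ℕ)) + ∑ j : Fin k, (p.2 j : ℕ))
        + ∑ j : Fin k, (p.2 j : ℕ) := by
  rw [sylvD, sylv_W_sum]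
  have h : ∀ i : Fin k, ((Finsupp.single (Sum.inl i) (sylvE k m p i)
      + Finsupp.single (Sum.inr i) (sylvF k m p i)).sum fun _ e => e)
      = ((∑ l : Fin (k+1), (p.1 l : ℕ)) + ∑ l : Fin k, (p.2 l : ℕ)) + (p.2 i : ℕ) := by
    intro i
    rw [Finsupp.sum_add_index' (fun _ => rfl) (fun _ _ _ => rfl), sylv_W_single, sylv_W_single]
    have h1 := sylv_split1 (fun l => (p.1 l : ℕ)) i
    have h2 := sylv_split2 (fun l => (p.2 l : ℕ)) i
    rw [sylvE, sylvF]
    omega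
  rw [Finset.sum_congr rfl (fun i _ => h i), Finset.sum_add_distrib, Finset.sum_const,
    Finset.card_univ, Fintype.card_fin, smul_eq_mul]

lemma sylvC_pos (k m : ℕ) (p : (Fin (k+1) → Fin (m+1)) × (Fin k → Fin (m+1)))
    (hx0 : ∑ i : Fin (k+1), (p.1 i : ℕ) = 0) : 0 < sylvC k m p := by
  have hx : ∀ i : Fin (k+1), (p.1 i : ℕ) = 0 := by
    intro i
    have := Finset.sum_eq_zero_iff.mp hx0 i (Finset.mem_univ i)
    exact this
  have hnum : (∏ i : Fin (k + 1), bernoulli (p.1 i : ℕ) / ((p.1 i : ℕ).factorial : ℚ)) = 1 := by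
    apply Finset.prod_eq_one
    intro i _
    rw [hx i]
    simp
  rw [sylvC, hnum]
  have hden : 0 < (∏ j : Fin k, (((p.2 j : ℕ) + 1).factorial : ℚ)) := by
    apply Finset.prod_pos
    intro j _
    positivity
  positivity

/-- Degree of Sylvester sums as polynomials: the summation part `Q` of the Bernoulli-number
formula for `S_{m-1}(A,B)`, viewed as a polynomial in the `2k` variables
`a₁,…,a_k,b₁,…,b_k` (the `aᵢ` are the `Sum.inl` variables and the `bᵢ` the `Sum.inr`
variables), has every monomial of total degree between `km` and `(k+1)m`, the full
polynomial `(m!/m)·Q − B_m/m` has total degree `(k+1)m` (so `S_{m-1}` has total degree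
`((m-1)+1)(k+1)`), and the coefficient of every top-degree monomial is positive. -/
theorem sylvester_polynomial_degree (k m : ℕ) (hk : 1 ≤ k) (hm : 1 ≤ m)
    (Q : MvPolynomial (Fin k ⊕ Fin k) ℚ)
    (hQ : Q = ∑ p ∈ (Finset.univ :
          Finset ((Fin (k + 1) → Fin (m + 1)) × (Fin k → Fin (m + 1)))).filter
            (fun p => (∑ i : Fin (k + 1), ((p.1 i : ℕ))) + (∑ j : Fin k, ((p.2 j : ℕ))) = m),
        MvPolynomial.C
            ((∏ i : Fin (k + 1), bernoulli (p.1 i : ℕ) / ((p.1 i : ℕ).factorial : ℚ)) /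
              (∏ j : Fin k, (((p.2 j : ℕ) + 1).factorial : ℚ))) *
          ∏ i : Fin k,
            MvPolynomial.X (Sum.inl i) ^
                ((∑ l ∈ Finset.univ.filter (fun l : Fin (k + 1) => (l : ℕ) ≤ (i : ℕ)),
                    (p.1 l : ℕ)) +
                  ∑ l ∈ Finset.univ.filter (fun l : Fin k => (l : ℕ) ≤ (i : ℕ)),
                    (p.2 l : ℕ)) *
              MvPolynomial.X (Sum.inr i) ^
                ((∑ l ∈ Finset.univ.filter (fun l : Fin (k + 1) => (i : ℕ) < (l : ℕ)),
                    (p.1 l : ℕ)) +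
                  ∑ l ∈ Finset.univ.filter (fun l : Fin k => (i : ℕ) ≤ (l : ℕ)),
                    (p.2 l : ℕ))) :
    -- every monomial of the summation has degree between km and (k+1)m
    (∀ d ∈ Q.support, k * m ≤ d.sum (fun _ e => e) ∧ d.sum (fun _ e => e) ≤ (k + 1) * m) ∧
    -- the full polynomial has total degree (k+1)m
    (MvPolynomial.C ((m.factorial : ℚ) / (m : ℚ)) * Q -
        MvPolynomial.C (bernoulli m / (m : ℚ))).totalDegree = (k + 1) * m ∧
    -- the top-degree coefficients are positive
    (∀ d ∈ Q.support, d.sum (fun _ e => e) = (k + 1) * m → 0 < Q.coeff d) := by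
    classical
  set F : Finset ((Fin (k + 1) → Fin (m + 1)) × (Fin k → Fin (m + 1))) :=
      Finset.univ.filter
        (fun p => (∑ i : Fin (k + 1), ((p.1 i : ℕ))) + (∑ j : Fin k, ((p.2 j : ℕ))) = m)
    with hF
  -- Q as a sum of monomials
  have key1 : Q = ∑ p ∈ F, monomial (sylvD k m p) (sylvC k m p) := by
    rw [hQ]
    refine Finset.sum_congr rfl fun p _ => ?_
    have hpp := sylv_prod_X_pow
      (fun i : Fin k =>
        (∑ l ∈ Finset.univ.filter (fun l : Fin (k + 1) => (l : ℕ) ≤ (i : ℕ)), (p.1 l : ℕ)) +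
          ∑ l ∈ Finset.univ.filter (fun l : Fin k => (l : ℕ) ≤ (i : ℕ)), (p.2 l : ℕ))
      (fun i : Fin k =>
        (∑ l ∈ Finset.univ.filter (fun l : Fin (k + 1) => (i : ℕ) < (l : ℕ)), (p.1 l : ℕ)) +
          ∑ l ∈ Finset.univ.filter (fun l : Fin k => (i : ℕ) ≤ (l : ℕ)), (p.2 l : ℕ))
      Finset.univ
    rw [hpp, C_mul_monomial, mul_one]
    rfl
  have hcoeff : ∀ d, Q.coeff d = ∑ p ∈ F, if sylvD k m p = d then sylvC k m p else 0 := by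
    intro d
    rw [key1, MvPolynomial.coeff_sum]
    exact Finset.sum_congr rfl fun p _ => coeff_monomial d (sylvD k m p) (sylvC k m p)
  have hDsum : ∀ p ∈ F, (sylvD k m p).sum (fun _ e => e)
      = k * m + ∑ j : Fin k, (p.2 j : ℕ) := by
    intro p hp
    have hmem := (Finset.mem_filter.mp hp).2
    rw [sylvD_sum, hmem]
  -- part 1
  have part1 : ∀ d ∈ Q.support,
      k * m ≤ d.sum (fun _ e => e) ∧ d.sum (fun _ e => e) ≤ (k + 1) * m := by
    intro d hd
    have hne : Q.coeff d ≠ 0 := mem_support_iff.mp hd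
    rw [hcoeff] at hne
    obtain ⟨p, hpF, hpd⟩ : ∃ p ∈ F, sylvD k m p = d := by
      by_contra hcon
      push_neg at hcon
      exact hne (Finset.sum_eq_zero fun p hp => if_neg (hcon p hp))
    have hsum := hDsum p hpF
    rw [hpd] at hsum
    have hmem := (Finset.mem_filter.mp hpF).2
    have hy : ∑ j : Fin k, (p.2 j : ℕ) ≤ m := by omega
    constructor
    · omega
    · rw [hsum]
      have : (k + 1) * m = k * m + m := by ring
      omega
  -- nonnegativity of top-degree terms
  have hterm : ∀ d : (Fin k ⊕ Fin k) →₀ ℕ, d.sum (fun _ e => e) = (k + 1) * m →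
      ∀ p ∈ F, 0 ≤ (if sylvD k m p = d then sylvC k m p else 0) := by
    intro d hdeg p hp
    split_ifs with h
    · have h1 := hDsum p hp
      rw [h] at h1
      have hmem := (Finset.mem_filter.mp hp).2
      have h2 : k * m + ∑ j : Fin k, (p.2 j : ℕ) = k * m + m := by
        rw [← h1, hdeg]; ring
      have hym : ∑ j : Fin k, (p.2 j : ℕ) = m := by omega
      have hx0 : ∑ i : Fin (k + 1), (p.1 i : ℕ) = 0 := by omega
      exact le_of_lt (sylvC_pos k m p hx0)
    · exact le_rfl
  -- part 3
  have part3 : ∀ d ∈ Q.support, d.sum (fun _ e => e) = (k + 1) * m → 0 < Q.coeff d := by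
    intro d hd hdeg
    have hne : Q.coeff d ≠ 0 := mem_support_iff.mp hd
    rw [hcoeff]
    rw [hcoeff] at hne
    exact lt_of_le_of_ne (Finset.sum_nonneg (hterm d hdeg)) (Ne.symm hne)
  -- the witness
  have hkpos : 0 < k := hk
  set p0 : (Fin (k + 1) → Fin (m + 1)) × (Fin k → Fin (m + 1)) :=
    (fun _ => 0, fun j => if j = ⟨0, hkpos⟩ then ⟨m, Nat.lt_succ_self m⟩ else 0) with hp0
  have hx0 : ∑ i : Fin (k + 1), (p0.1 i : ℕ) = 0 := by simp [hp0]
  have hy0 : ∑ j : Fin k, (p0.2 j : ℕ) = m := by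
    rw [hp0]
    simp only
    rw [Finset.sum_congr rfl
      (fun j _ => apply_ite (fun a : Fin (m+1) => (a : ℕ)) (j = ⟨0, hkpos⟩) _ _)]
    simp
  have hp0F : p0 ∈ F := by
    rw [hF, Finset.mem_filter]
    exact ⟨Finset.mem_univ _, by rw [hx0, hy0]; omega⟩
  set d0 := sylvD k m p0 with hd0
  have hd0sum : d0.sum (fun _ e => e) = (k + 1) * m := by
    rw [hd0, hDsum p0 hp0F, hy0]; ring
  have hco : 0 < Q.coeff d0 := by
    rw [hcoeff]
    refine Finset.sum_pos' (hterm d0 hd0sum) ⟨p0, hp0F, ?_⟩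
    rw [if_pos rfl]
    exact sylvC_pos k m p0 hx0
  have hd0mem : d0 ∈ Q.support := mem_support_iff.mpr (ne_of_gt hco)
  -- part 2
  have hQle : Q.totalDegree ≤ (k + 1) * m := Finset.sup_le fun d hd => (part1 d hd).2
  have hc1ne : ((m.factorial : ℚ) / (m : ℚ)) ≠ 0 := by
    have h1 : (m.factorial : ℚ) ≠ 0 := Nat.cast_ne_zero.mpr (Nat.factorial_ne_zero m)
    have h2 : (m : ℚ) ≠ 0 := Nat.cast_ne_zero.mpr (by omega)
    exact div_ne_zero h1 h2
  have hd0ne : d0 ≠ 0 := by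
    intro h
    have := hd0sum
    rw [h] at this
    simp only [Finsupp.sum_zero_index] at this
    have hpos : 0 < (k + 1) * m := Nat.mul_pos (by omega) (by omega)
    omega
  set P := C ((m.factorial : ℚ) / (m : ℚ)) * Q - C (bernoulli m / (m : ℚ)) with hP
  have hcoP : P.coeff d0 = ((m.factorial : ℚ) / (m : ℚ)) * Q.coeff d0 := by
    rw [hP, coeff_sub, coeff_C_mul, coeff_C, if_neg (Ne.symm hd0ne), sub_zero]
  have hPge : (k + 1) * m ≤ P.totalDegree := by
    have : d0 ∈ P.support := mem_support_iff.mpr (by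
      rw [hcoP]
      exact mul_ne_zero hc1ne (ne_of_gt hco))
    calc (k + 1) * m = d0.sum (fun _ e => e) := hd0sum.symm
      _ ≤ P.totalDegree := le_totalDegree this
  have hPle : P.totalDegree ≤ (k + 1) * m := by
    rw [hP, sub_eq_add_neg]
    refine le_trans (totalDegree_add _ _) (max_le ?_ ?_)
    · refine le_trans (totalDegree_mul _ _) ?_
      simpa [totalDegree_C] using hQle
    · rw [totalDegree_neg, totalDegree_C]
      exact Nat.zero_le _
  exact ⟨part1, le_antisymm hPle hPge, part3⟩
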